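/- Let n ≥ 1 be an integer, let l₀, l₁, …, lₙ be nonnegative integers with L := l₀ + l₁ + ⋯ + lₙ < n, and let y₁, …, yₙ be admissible real numbers. Then Φₙ(l₀,…,lₙ; y₁,…,yₙ) = 0. -/

import Mathlib

/-- `S y a b = y_a + y_{a+1} + ⋯ + y_b`. -/
noncomputable def S (y : ℕ → ℝ) (a b : ℕ) : ℝ := ∑ t ∈ Finset.Icc a b, y t

/-- `(y₁, …, yₙ)` is admissible if `S(a,b) ≠ 0` for all `1 ≤ a ≤ b ≤ n`. -/
def Admissible (n : ℕ) (y : ℕ → ℝ) : Prop :=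
  ∀ a b : ℕ, 1 ≤ a → a ≤ b → b ≤ n → S y a b ≠ 0

/-- `Φₙ(l₀,…,lₙ; y₁,…,yₙ)`, the pointwise ε→0 value of the distributional sum of
Lemma 1 of the paper. -/
noncomputable def Phi (n : ℕ) (l : ℕ → ℕ) (y : ℕ → ℝ) : ℝ :=
  ∑ m ∈ Finset.range (n + 1),
    (-1 : ℝ) ^ m *
      (∏ r ∈ Finset.range m, (-S y (r + 1) m) ^ l r / S y (r + 1) m) *
      (if l m = 0 then 1 else 0) *
      (∏ r ∈ Finset.Icc (m + 1) n, (S y (m + 1) r) ^ l r / S y (m + 1) r)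

open Finset Polynomial

/-- The coefficient of degree `#s - 1` of the Lagrange basis polynomial is the nodal weight. -/
lemma coeff_lagrange_basis {F : Type*} [Field F] {ι : Type*} [DecidableEq ι]
    {s : Finset ι} {v : ι → F} {i : ι} (hi : i ∈ s) :
    (Lagrange.basis s v i).coeff (#s - 1) = Lagrange.nodalWeight s v i := by
  rw [Lagrange.basis_eq_prod_sub_inv_mul_nodal_div hi, ← Lagrange.nodal_erase_eq_nodal_div hi,
    coeff_C_mul]
  have h : (Lagrange.nodal (s.erase i) v).natDegree = #s - 1 := by
    rw [Lagrange.natDegree_nodal, card_erase_of_mem hi]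
  rw [← h, (Lagrange.nodal_monic).coeff_natDegree, mul_one]

/-- Key lemma: sum of nodal weights times values of a polynomial of degree `< #s - 1`
at the nodes vanishes. -/
lemma sum_nodalWeight_mul_eval {F : Type*} [Field F] {ι : Type*} [DecidableEq ι]
    {s : Finset ι} {v : ι → F} (hvs : Set.InjOn v s) (Q : F[X])
    (hQ : Q.degree < ((#s - 1 : ℕ) : WithBot ℕ)) :
    ∑ i ∈ s, Lagrange.nodalWeight s v i * Q.eval (v i) = 0 := by
  have hcard : Q.degree < (#s : ℕ) := by
    refine lt_of_lt_of_le hQ ?_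
    exact_mod_cast Nat.sub_le _ _
  have hint := Lagrange.eq_interpolate hvs hcard
  have h0 : Q.coeff (#s - 1) = 0 := Polynomial.coeff_eq_zero_of_degree_lt hQ
  rw [hint, Lagrange.interpolate_apply, Polynomial.finset_sum_coeff] at h0
  rw [← h0]
  refine Finset.sum_congr rfl fun i hi => ?_
  rw [coeff_C_mul, coeff_lagrange_basis hi, mul_comm]

lemma S_eq_sub (y : ℕ → ℝ) {r m : ℕ} (h : r ≤ m) :
    S y (r + 1) m = S y 1 m - S y 1 r := by
  have hI : ∀ a k : ℕ, Finset.Icc (a + 1) k = Finset.Ioc a k := by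
    intro a k; ext t; simp only [Finset.mem_Icc, Finset.mem_Ioc]; omega
  have h1 : ∀ k : ℕ, S y 1 k = ∑ t ∈ Finset.Ioc 0 k, y t := by
    intro k; rw [S, ← hI 0 k]
  have h2 : S y (r + 1) m = ∑ t ∈ Finset.Ioc r m, y t := by
    rw [S, hI]
  rw [h1, h1, h2, eq_sub_iff_add_eq, add_comm]
  exact Finset.sum_Ioc_consecutive _ (Nat.zero_le r) h

/-- if `L = l₀ + ⋯ + lₙ < n` then `Φₙ(l₀,…,lₙ; y₁,…,yₙ) = 0` for
every admissible tuple `(y₁,…,yₙ)`. -/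
theorem Phi_eq_zero_of_sum_lt (n : ℕ) (hn : 1 ≤ n) (l : ℕ → ℕ) (y : ℕ → ℝ)
    (hL : ∑ r ∈ Finset.range (n + 1), l r < n)
    (hy : Admissible n y) :
    Phi n l y = 0 := by
  classical
  set x : ℕ → ℝ := fun k => S y 1 k with hx
  set s : Finset ℕ := Finset.range (n + 1) with hs
  -- distinctness of the nodes
  have hne : ∀ {r m : ℕ}, r < m → m ≤ n → x m - x r ≠ 0 := by
    intro r m hrm hm h
    have := hy (r + 1) m (Nat.le_add_left 1 r) hrm hm
    rw [S_eq_sub y (le_of_lt hrm)] at this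
    exact this h
  have hvs : Set.InjOn x s := by
    intro a ha b hb hab
    simp only [hs, coe_range, Set.mem_Iio] at ha hb
    by_contra hne'
    rcases lt_or_gt_of_ne hne' with h | h
    · exact hne h (Nat.lt_succ_iff.mp hb) (by rw [hab]; ring)
    · exact hne h (Nat.lt_succ_iff.mp ha) (by rw [hab]; ring)
  -- the interpolated polynomial
  set Q : Polynomial ℝ := ∏ r ∈ s, (Polynomial.C (x r) - Polynomial.X) ^ l r with hQ
  have hQdeg : Q.degree < ((#s - 1 : ℕ) : WithBot ℕ) := by
    have h1 : Q.natDegree ≤ ∑ r ∈ s, l r := by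
      refine le_trans (Polynomial.natDegree_prod_le _ _) (Finset.sum_le_sum fun r _ => ?_)
      refine le_trans (Polynomial.natDegree_pow_le) ?_
      have : (Polynomial.C (x r) - Polynomial.X : Polynomial ℝ).natDegree ≤ 1 := by
        refine le_trans (Polynomial.natDegree_sub_le _ _) ?_
        simp
      calc l r * (Polynomial.C (x r) - Polynomial.X : Polynomial ℝ).natDegree
          ≤ l r * 1 := Nat.mul_le_mul_left _ this
        _ = l r := Nat.mul_one _
    have h2 : Q.natDegree < #s - 1 := by
      have : #s = n + 1 := by simp [hs]
      omega
    refine lt_of_le_of_lt Polynomial.degree_le_natDegree ?_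
    exact_mod_cast h2
  have hQev : ∀ m : ℕ, Q.eval (x m) = ∏ r ∈ s, (x r - x m) ^ l r := by
    intro m
    simp [hQ, Polynomial.eval_prod]
  have key := sum_nodalWeight_mul_eval hvs Q hQdeg
  -- identify each term of Phi
  have hterm : ∀ m ∈ s,
      (-1 : ℝ) ^ m *
        (∏ r ∈ Finset.range m, (-S y (r + 1) m) ^ l r / S y (r + 1) m) *
        (if l m = 0 then 1 else 0) *
        (∏ r ∈ Finset.Icc (m + 1) n, (S y (m + 1) r) ^ l r / S y (m + 1) r)
      = (-1 : ℝ) ^ n * (Lagrange.nodalWeight s x m * Q.eval (x m)) := by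
    intro m hm
    have hmn : m ≤ n := Nat.lt_succ_iff.mp (Finset.mem_range.mp hm)
    -- rewrite the S's
    have e1 : ∀ r ∈ Finset.range m, (-S y (r + 1) m) ^ l r / S y (r + 1) m
        = (x r - x m) ^ l r / (x m - x r) := by
      intro r hr
      rw [S_eq_sub y (le_of_lt (Finset.mem_range.mp hr))]
      simp only [hx]
      ring_nf
    have e2 : ∀ r ∈ Finset.Icc (m + 1) n, (S y (m + 1) r) ^ l r / S y (m + 1) r
        = (x r - x m) ^ l r / (x r - x m) := by
      intro r hr
      rw [S_eq_sub y (Nat.le_of_succ_le (Finset.mem_Icc.mp hr).1)]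
    rw [Finset.prod_congr rfl e1, Finset.prod_congr rfl e2, hQev m]
    by_cases hlm : l m = 0
    · rw [if_pos hlm, mul_one]
      -- split the erase set
      have hsplit : s.erase m = Finset.range m ∪ Finset.Icc (m + 1) n := by
        ext t
        simp only [Finset.mem_erase, Finset.mem_union, Finset.mem_range, Finset.mem_Icc, hs]
        omega
      have hdisj : Disjoint (Finset.range m) (Finset.Icc (m + 1) n) := by
        rw [Finset.disjoint_left]
        intro t ht ht'
        simp only [Finset.mem_range] at ht
        simp only [Finset.mem_Icc] at ht'
        omega
      have hprod : ∀ f : ℕ → ℝ, ∏ r ∈ s.erase m, f r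
          = (∏ r ∈ Finset.range m, f r) * ∏ r ∈ Finset.Icc (m + 1) n, f r := by
        intro f; rw [hsplit, Finset.prod_union hdisj]
      have hP : ∏ r ∈ s, (x r - x m) ^ l r = ∏ r ∈ s.erase m, (x r - x m) ^ l r := by
        rw [Finset.prod_erase]
        simp [hlm]
      rw [hP, Lagrange.nodalWeight, hprod, hprod]
      -- signs
      have hcard : #(Finset.Icc (m + 1) n) = n - m := by
        rw [Nat.card_Icc]; omega
      have hIcc : ∏ r ∈ Finset.Icc (m + 1) n, (x r - x m) ^ l r / (x r - x m)
          = (-1 : ℝ) ^ (n - m) *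
            ∏ r ∈ Finset.Icc (m + 1) n, (x r - x m) ^ l r * (x m - x r)⁻¹ := by
        rw [← hcard, ← Finset.prod_const, ← Finset.prod_mul_distrib]
        refine Finset.prod_congr rfl fun r _ => ?_
        rw [show x m - x r = -(x r - x m) from by ring, inv_neg, div_eq_mul_inv]
        ring
      have hrange : ∏ r ∈ Finset.range m, (x r - x m) ^ l r / (x m - x r)
          = ∏ r ∈ Finset.range m, (x r - x m) ^ l r * (x m - x r)⁻¹ := by
        refine Finset.prod_congr rfl fun r _ => div_eq_mul_inv _ _
      rw [hIcc, hrange, Finset.prod_mul_distrib, Finset.prod_mul_distrib]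
      have hsign : (-1 : ℝ) ^ m * (-1 : ℝ) ^ (n - m) = (-1 : ℝ) ^ n := by
        rw [← pow_add]
        congr 1
        omega
      calc (-1 : ℝ) ^ m *
            ((∏ r ∈ Finset.range m, (x r - x m) ^ l r) *
              ∏ r ∈ Finset.range m, (x m - x r)⁻¹) *
            ((-1 : ℝ) ^ (n - m) *
              ((∏ r ∈ Finset.Icc (m + 1) n, (x r - x m) ^ l r) *
                ∏ r ∈ Finset.Icc (m + 1) n, (x m - x r)⁻¹))
          = ((-1 : ℝ) ^ m * (-1 : ℝ) ^ (n - m)) *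
            (((∏ r ∈ Finset.range m, (x m - x r)⁻¹) *
                ∏ r ∈ Finset.Icc (m + 1) n, (x m - x r)⁻¹) *
              ((∏ r ∈ Finset.range m, (x r - x m) ^ l r) *
                ∏ r ∈ Finset.Icc (m + 1) n, (x r - x m) ^ l r)) := by ring
        _ = _ := by rw [hsign]
    · have : ∏ r ∈ s, (x r - x m) ^ l r = 0 := by
        refine Finset.prod_eq_zero hm ?_
        rw [sub_self]
        exact zero_pow hlm
      rw [if_neg hlm, this]
      ring
  rw [Phi, Finset.sum_congr rfl hterm, ← Finset.mul_sum, key, mul_zero]
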